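/- For any n ≥ 2 the kernel of β_n is a free abelian group of rank (n−1)!·(n−1). -/

import Mathlib

/-- The left-normed Lie bracket `[a₁,…,aₘ]` of a list of elements of a Lie ring,
defined by `[a₁] = a₁` and `[a₁,…,aₘ] = [[a₁,…,a_{m-1}], aₘ]` (and `0` for the empty list). -/
def lieWord {L : Type*} [LieRing L] : List L → L
  | [] => 0
  | x :: xs => xs.foldl (fun a b => ⁅a, b⁆) x

attribute [local instance] LieRing.ofAssociativeRing

/-- bracketing on the right as a `ℤ`-linear map -/
noncomputable def rbr {L : Type*} [LieRing L] (a : L) : L →ₗ[ℤ] L :=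
  (AddMonoidHom.mk' (fun x => ⁅x, a⁆) (fun x y => add_lie x y a)).toIntLinearMap

@[simp] lemma rbr_apply {L : Type*} [LieRing L] (a x : L) : rbr a x = ⁅x, a⁆ := rfl

lemma lieWord_append_singleton {L : Type*} [LieRing L] (l : List L) (hl : l ≠ []) (a : L) :
    lieWord (l ++ [a]) = ⁅lieWord l, a⁆ := by
  cases l with
  | nil => simp at hl
  | cons x xs => simp [lieWord, List.foldl_append]

lemma lie_lie' {L : Type*} [LieRing L] (v u a : L) :
    ⁅v, ⁅u, a⁆⁆ = ⁅⁅v, u⁆, a⁆ - ⁅⁅v, a⁆, u⁆ := by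
  rw [lie_lie v u a, ← lie_skew (⁅v, a⁆) u]
  abel

lemma lie_lieWord_mem {L : Type*} [LieRing L] (l : List L) :
    l ≠ [] → ∀ v : L,
      ⁅v, lieWord l⁆ ∈ Submodule.span ℤ
        {x | ∃ p : List L, p.Perm l ∧ x = p.foldl (fun a b => ⁅a, b⁆) v} := by
  induction l using List.reverseRecOn with
  | nil => simp
  | append_singleton l₀ a ih =>
    intro _ v
    rcases eq_or_ne l₀ [] with rfl | h₀
    · refine Submodule.subset_span ⟨[a], List.Perm.refl _, ?_⟩
      simp [lieWord]
    · rw [lieWord_append_singleton l₀ h₀ a, lie_lie']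
      refine sub_mem ?_ ?_
      · have h1 := Submodule.apply_mem_span_image_of_mem_span (rbr a) (ih h₀ v)
        refine Submodule.span_mono ?_ h1
        rintro _ ⟨x, ⟨p, hp, rfl⟩, rfl⟩
        exact ⟨p ++ [a], hp.append_right [a], by simp [List.foldl_append]⟩
      · refine Submodule.span_mono ?_ (ih h₀ ⁅v, a⁆)
        rintro _ ⟨p, hp, rfl⟩
        exact ⟨a :: p, (hp.cons a).trans (List.perm_append_singleton a l₀).symm, rfl⟩

lemma lieWord_mem_span_head {L : Type*} [LieRing L] (c : L) (l : List L) :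
    c ∈ l →
      lieWord l ∈ Submodule.span ℤ
        {x | ∃ p : List L, (c :: p).Perm l ∧ x = p.foldl (fun a b => ⁅a, b⁆) c} := by
  induction l using List.reverseRecOn with
  | nil => simp
  | append_singleton l₀ a ih =>
    intro hc
    rcases eq_or_ne l₀ [] with rfl | h₀
    · have hca : c = a := by simpa using hc
      subst hca
      refine Submodule.subset_span ⟨[], List.Perm.refl _, ?_⟩
      simp [lieWord]
    · by_cases hcl : c ∈ l₀
      · rw [lieWord_append_singleton l₀ h₀ a]
        have h1 := Submodule.apply_mem_span_image_of_mem_span (rbr a) (ih hcl)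
        refine Submodule.span_mono ?_ h1
        rintro _ ⟨x, ⟨p, hp, rfl⟩, rfl⟩
        refine ⟨p ++ [a], ?_, by simp [List.foldl_append]⟩
        have := hp.append_right [a]
        simpa using this
      · have hca : c = a := by
          rcases List.mem_append.1 hc with h | h
          · exact absurd h hcl
          · simpa using h
        subst hca
        rw [lieWord_append_singleton l₀ h₀ c, ← lie_skew]
        refine neg_mem ?_
        refine Submodule.span_mono ?_ (lie_lieWord_mem l₀ h₀ c)
        rintro _ ⟨p, hp, rfl⟩
        exact ⟨p, (hp.cons c).trans (List.perm_append_singleton c l₀).symm, rfl⟩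


open MonoidAlgebra FreeMonoid

variable {X : Type*} [DecidableEq X]

/-- coefficient of the word `c :: t` in the left-normed bracket of singles -/
lemma coeff_foldl_bracket (c : X) (ys : List X) :
    c ∉ ys → ∀ t : List X,
    (ys.foldl (fun a b => ⁅a, MonoidAlgebra.single (FreeMonoid.of b) (1:ℤ)⁆)
        (MonoidAlgebra.single (FreeMonoid.of c) 1) : MonoidAlgebra ℤ (FreeMonoid X)).coeff
      (FreeMonoid.ofList (c :: t)) = if t = ys then 1 else 0 := by
  induction ys using List.reverseRecOn with
  | nil =>
    intro _ t
    simp only [List.foldl_nil]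
    by_cases h : t = []
    · subst h
      simp
    · rw [if_neg h]
      refine Finsupp.single_eq_of_ne ?_
      intro hh
      have := congrArg FreeMonoid.toList hh
      simp at this
      exact h this
  | append_singleton ys₀ y ih =>
    intro hc t
    have hc0 : c ∉ ys₀ := fun h => hc (List.mem_append.2 (Or.inl h))
    have hcy : c ≠ y := fun h => hc (by simp [h])
    rw [List.foldl_append]
    set u₀ : MonoidAlgebra ℤ (FreeMonoid X) :=
      ys₀.foldl (fun a b => ⁅a, MonoidAlgebra.single (FreeMonoid.of b) (1:ℤ)⁆)
        (MonoidAlgebra.single (FreeMonoid.of c) 1) with hu₀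
    simp only [List.foldl_cons, List.foldl_nil]
    rw [Ring.lie_def]
    rw [MonoidAlgebra.coeff_sub, Finsupp.sub_apply]
    have hright : (MonoidAlgebra.single (FreeMonoid.of y) (1:ℤ) * u₀).coeff
        (FreeMonoid.ofList (c :: t)) = 0 := by
      apply MonoidAlgebra.single_mul_apply_of_not_exists_mul
      rintro ⟨d, hd⟩
      have h2 := congrArg FreeMonoid.toList hd
      simp only [FreeMonoid.toList_mul, FreeMonoid.toList_of, FreeMonoid.toList_ofList] at h2
      exact hcy (List.head_eq_of_cons_eq h2)
    rw [hright, sub_zero]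
    rcases List.eq_nil_or_concat t with rfl | ⟨t₀, z, rfl⟩
    · have hz : (u₀ * MonoidAlgebra.single (FreeMonoid.of y) (1:ℤ)).coeff
          (FreeMonoid.ofList [c]) = 0 := by
        apply MonoidAlgebra.mul_single_apply_of_not_exists_mul
        rintro ⟨d, hd⟩
        have h2 := congrArg FreeMonoid.toList hd
        simp only [FreeMonoid.toList_mul, FreeMonoid.toList_of, FreeMonoid.toList_ofList] at h2
        have := congrArg List.getLast? h2
        simp [List.getLast?_concat] at this
        exact hcy this
      rw [hz]
      have : ([] : List X) ≠ ys₀ ++ [y] := by simp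
      simp [this]
    · rw [List.concat_eq_append]
      by_cases hzy : z = y
      · subst hzy
        have key : ∀ a : FreeMonoid X, a * FreeMonoid.of z = FreeMonoid.ofList (c :: (t₀ ++ [z]))
            ↔ a = FreeMonoid.ofList (c :: t₀) := by
          intro a
          constructor
          · intro h
            have h2 := congrArg FreeMonoid.toList h
            simp only [FreeMonoid.toList_mul, FreeMonoid.toList_of,
              FreeMonoid.toList_ofList, ← List.cons_append] at h2
            have h3 : FreeMonoid.toList a = c :: t₀ := List.append_cancel_right h2
            have := congrArg FreeMonoid.ofList h3
            simpa [FreeMonoid.ofList_toList] using this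
          · rintro rfl; rfl
        rw [MonoidAlgebra.coeff_mul_single_eq_coeff_mul (x := u₀) _ (fun a _ => key a)]
        rw [ih hc0 t₀, mul_one]
        by_cases h : t₀ = ys₀
        · simp [h]
        · have hne : t₀ ++ [z] ≠ ys₀ ++ [z] := by simpa using h
          simp [h, hne]
      · have hz : (u₀ * MonoidAlgebra.single (FreeMonoid.of y) (1:ℤ)).coeff
            (FreeMonoid.ofList (c :: (t₀ ++ [z]))) = 0 := by
          apply MonoidAlgebra.mul_single_apply_of_not_exists_mul
          rintro ⟨d, hd⟩
          have h2 := congrArg FreeMonoid.toList hd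
          simp only [FreeMonoid.toList_mul, FreeMonoid.toList_of,
            FreeMonoid.toList_ofList, ← List.cons_append] at h2
          have h4 := congrArg List.getLast? h2
          rw [List.getLast?_concat, List.getLast?_concat] at h4
          exact hzy (Option.some_injective _ h4)
        rw [hz]
        have hne : t₀ ++ [z] ≠ ys₀ ++ [y] := by
          intro hh
          have := congrArg List.getLast? hh
          simp [List.getLast?_concat] at this
          exact hzy this
        simp [hne]

lemma E_iota {m : ℕ} (x : Fin m) :
    (FreeAlgebra.equivMonoidAlgebraFreeMonoid (R := ℤ) (X := Fin m)) (FreeAlgebra.ι ℤ x)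
      = MonoidAlgebra.single (FreeMonoid.of x) 1 := by
  simp [FreeAlgebra.equivMonoidAlgebraFreeMonoid, FreeAlgebra.lift_ι_apply,
    MonoidAlgebra.of_apply]

lemma ringHom_foldl {A B : Type*} [Ring A] [Ring B] (f : A →+* B) (x : A) (l : List A) :
    f (l.foldl (fun a b => ⁅a, b⁆) x) = (l.map f).foldl (fun a b => ⁅a, b⁆) (f x) := by
  induction l generalizing x with
  | nil => rfl
  | cons a l ih =>
    rw [List.foldl_cons, ih, List.map_cons, List.foldl_cons]
    congr 1
    simp [Ring.lie_def]

lemma lieWord_ofFn_succ {L : Type*} [LieRing L] {m : ℕ} (f : Fin (m+1) → L) :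
    lieWord (List.ofFn f)
      = (List.ofFn fun i : Fin m => f i.succ).foldl (fun a b => ⁅a, b⁆) (f 0) := by
  rw [List.ofFn_succ]; rfl

lemma E_bword_apply {m : ℕ} (σ : Equiv.Perm (Fin (m+1))) (hσ : σ 0 = 0)
    (t : List (Fin (m+1))) (hcoeff : ∀ (c : Fin (m+1)) (ys : List (Fin (m+1))),
      c ∉ ys → ∀ t : List (Fin (m+1)),
      (ys.foldl (fun a b => ⁅a, MonoidAlgebra.single (FreeMonoid.of b) (1:ℤ)⁆)
          (MonoidAlgebra.single (FreeMonoid.of c) 1) : MonoidAlgebra ℤ (FreeMonoid (Fin (m+1)))).coeff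
        (FreeMonoid.ofList (c :: t)) = if t = ys then 1 else 0) :
    ((FreeAlgebra.equivMonoidAlgebraFreeMonoid (R := ℤ) (X := Fin (m+1)))
        (lieWord (List.ofFn fun i => FreeAlgebra.ι ℤ (σ i)))).coeff
      (FreeMonoid.ofList ((0 : Fin (m+1)) :: t))
      = if t = List.ofFn (fun i : Fin m => σ i.succ) then 1 else 0 := by
  set E := (FreeAlgebra.equivMonoidAlgebraFreeMonoid (R := ℤ) (X := Fin (m+1))) with hE
  set f : FreeAlgebra ℤ (Fin (m+1)) →+* MonoidAlgebra ℤ (FreeMonoid (Fin (m+1))) :=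
    E.toAlgHom.toRingHom with hf
  have hEf : ∀ z, E z = f z := fun z => rfl
  rw [lieWord_ofFn_succ, hEf, ringHom_foldl]
  have h1 : (List.ofFn fun i : Fin m => FreeAlgebra.ι ℤ (σ i.succ)).map f
      = (List.ofFn fun i : Fin m => σ i.succ).map
          (fun b => MonoidAlgebra.single (FreeMonoid.of b) (1:ℤ)) := by
    rw [List.map_ofFn, List.map_ofFn]
    congr 1
    funext i
    exact (hEf _).symm.trans (E_iota _)
  have h2 : f (FreeAlgebra.ι ℤ (σ 0))
      = MonoidAlgebra.single (FreeMonoid.of (0 : Fin (m+1))) 1 := by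
    rw [← hEf, E_iota, hσ]
  rw [h1, h2, List.foldl_map]
  apply hcoeff
  intro h
  rcases List.mem_ofFn.1 h with ⟨i, hi⟩
  have : i.succ = σ.symm 0 := by
    apply_fun σ.symm at hi
    simpa using hi
  have hs : σ.symm 0 = 0 := by rw [Equiv.symm_apply_eq, hσ]
  rw [hs] at this
  exact Fin.succ_ne_zero i this

lemma bword_indep {m : ℕ} :
    LinearIndependent ℤ (fun τ : {τ : Equiv.Perm (Fin (m+1)) // τ 0 = 0} =>
      lieWord (List.ofFn fun i => FreeAlgebra.ι ℤ (τ.1 i))) := by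
  classical
  rw [linearIndependent_iff']
  intro s g hsum i hi
  set E := (FreeAlgebra.equivMonoidAlgebraFreeMonoid (R := ℤ) (X := Fin (m+1))) with hE
  set w := FreeMonoid.ofList ((0 : Fin (m+1)) :: List.ofFn (fun j : Fin m => i.1 j.succ)) with hw
  have h0 := congrArg (fun z => (E z).coeff w) hsum
  simp only [map_sum, map_smul, map_zsmul, map_zero, MonoidAlgebra.coeff_sum, MonoidAlgebra.coeff_zero, Finsupp.coe_zero, Pi.zero_apply] at h0
  rw [Finsupp.finset_sum_apply] at h0
  have hterm : ∀ τ ∈ s,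
      ((g τ • E (lieWord (List.ofFn fun k => FreeAlgebra.ι ℤ (τ.1 k)))).coeff w)
        = if τ = i then g τ else 0 := by
    intro τ _
    rw [MonoidAlgebra.coeff_smul, Finsupp.smul_apply, hw, E_bword_apply τ.1 τ.2 _ coeff_foldl_bracket]
    by_cases h : τ = i
    · subst h; simp
    · have hne : ¬(List.ofFn (fun j : Fin m => i.1 j.succ)
          = List.ofFn fun j : Fin m => τ.1 j.succ) := by
        intro hh
        apply h
        have h2 := List.ofFn_inj.1 hh
        refine Subtype.ext (Equiv.ext fun x => ?_)
        refine Fin.cases ?_ (fun j => ?_) x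
        · rw [τ.2, i.2]
        · exact (congrFun h2 j).symm
      simp [hne, h]
  rw [Finset.sum_congr rfl hterm, Finset.sum_ite_eq' s i (fun τ => g τ), if_pos hi] at h0
  exact h0

lemma bword_mem_span {m : ℕ} (σ : Equiv.Perm (Fin (m+1))) :
    lieWord (List.ofFn fun i => FreeAlgebra.ι ℤ (σ i)) ∈
      Submodule.span ℤ (Set.range fun τ : {τ : Equiv.Perm (Fin (m+1)) // τ 0 = 0} =>
        lieWord (List.ofFn fun i => FreeAlgebra.ι ℤ (τ.1 i))) := by
  classical
  have hmem : FreeAlgebra.ι ℤ (0 : Fin (m+1)) ∈ (List.ofFn fun i => FreeAlgebra.ι ℤ (σ i)) := by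
    rw [List.mem_ofFn]
    exact ⟨σ.symm 0, by simp⟩
  refine Submodule.span_mono ?_ (lieWord_mem_span_head (FreeAlgebra.ι ℤ (0 : Fin (m+1))) _ hmem)
  rintro x ⟨p, hp, rfl⟩
  have hinj : Function.Injective (FreeAlgebra.ι ℤ : Fin (m+1) → FreeAlgebra ℤ (Fin (m+1))) :=
    FreeAlgebra.ι_injective
  set ι' : Fin (m+1) → FreeAlgebra ℤ (Fin (m+1)) := FreeAlgebra.ι ℤ with hι'
  set inv : FreeAlgebra ℤ (Fin (m+1)) → Fin (m+1) := Function.invFun ι' with hinv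
  have linv : ∀ y, inv (ι' y) = y := fun y => Function.leftInverse_invFun hinj y
  rw [show (List.ofFn fun i => ι' (σ i)) = (List.ofFn σ).map ι' from List.map_ofFn.symm]
    at hp
  have hsub : ∀ z ∈ ι' 0 :: p, ∃ y, z = ι' y := by
    intro z hz
    rcases List.mem_map.1 (hp.subset hz) with ⟨y, _, rfl⟩
    exact ⟨y, rfl⟩
  set L : List (Fin (m+1)) := (ι' 0 :: p).map inv with hLdef
  have hmapL : L.map ι' = ι' 0 :: p := by
    rw [hLdef, List.map_map]
    conv_rhs => rw [← List.map_id (ι' 0 :: p)]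
    refine List.map_congr_left ?_
    intro z hz
    rcases hsub z hz with ⟨y, rfl⟩
    simp [Function.comp, linv]
  have hLperm : L.Perm (List.ofFn σ) := by
    have h3 := hp.map inv
    rw [List.map_map] at h3
    have h2 : (List.ofFn σ).map (inv ∘ ι') = List.ofFn σ := by
      conv_rhs => rw [← List.map_id (List.ofFn σ)]
      exact List.map_congr_left fun a _ => linv a
    rw [h2] at h3
    exact h3
  have hlen : L.length = m + 1 := by
    rw [hLperm.length_eq, List.length_ofFn]
  have hnd : L.Nodup := hLperm.nodup_iff.2 (List.nodup_ofFn.2 σ.injective)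
  have hget : Function.Injective fun j : Fin (m+1) => L.get (Fin.cast hlen.symm j) := by
    intro a b hab
    have h4 := List.nodup_iff_injective_get.1 hnd hab
    have := congrArg Fin.val h4
    exact Fin.ext this
  let τ : Equiv.Perm (Fin (m+1)) :=
    Equiv.ofBijective _ ((Finite.injective_iff_bijective).1 hget)
  have hτapp : ∀ j, τ j = L.get (Fin.cast hlen.symm j) := fun j => rfl
  have hτ0 : τ 0 = 0 := by
    rw [hτapp]
    have : L.get (Fin.cast hlen.symm 0) = inv (ι' 0) := rfl
    rw [this, linv]
  have hofn : (List.ofFn fun j => ι' (τ j)) = ι' 0 :: p := by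
    have h1 : List.ofFn (fun j : Fin (m+1) => L.get (Fin.cast hlen.symm j)) = L := by
      apply List.ext_get (by simp [hlen])
      intro i hi1 hi2
      rw [List.get_ofFn]
      rfl
    calc (List.ofFn fun j => ι' (τ j))
        = (List.ofFn fun j : Fin (m+1) => L.get (Fin.cast hlen.symm j)).map ι' := by
          rw [List.map_ofFn]; rfl
      _ = L.map ι' := by rw [h1]
      _ = ι' 0 :: p := hmapL
  refine ⟨⟨τ, hτ0⟩, ?_⟩
  show lieWord (List.ofFn fun i => ι' (τ i)) = _
  rw [hofn]
  rfl

noncomputable def splitKer {R M W : Type*} [Ring R] [AddCommGroup M] [Module R M]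
    [AddCommGroup W] [Module R W] (f : M →ₗ[R] W) (g : W →ₗ[R] M)
    (hg : f.comp g = LinearMap.id) :
    M ≃ₗ[R] (LinearMap.ker f) × W := by
  have hcomp : ∀ w, f (g w) = w := fun w => by
    have := LinearMap.ext_iff.1 hg w
    simpa using this
  refine LinearEquiv.ofLinear
    (LinearMap.prod ((LinearMap.id - g.comp f).codRestrict (LinearMap.ker f)
      (fun x => by simp [LinearMap.mem_ker, hcomp])) f)
    (((LinearMap.ker f).subtype.comp (LinearMap.fst R _ _)) + (g.comp (LinearMap.snd R _ _)))
    ?_ ?_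
  · apply LinearMap.ext
    rintro ⟨⟨k, hk⟩, w⟩
    have hk' : f k = 0 := hk
    refine Prod.ext (Subtype.ext ?_) ?_
    · simp [hk', hcomp]
    · simp [hk', hcomp]
  · apply LinearMap.ext
    intro x
    simp

lemma card_sub (m : ℕ) :
    Fintype.card {τ : Equiv.Perm (Fin (m+1)) // τ 0 = 0} = Nat.factorial m := by
  have e : {τ : Equiv.Perm (Fin (m+1)) // τ 0 = 0} ≃ Equiv.Perm (Fin m) :=
    { toFun := fun τ => (Equiv.Perm.decomposeFin τ.1).2
      invFun := fun π => ⟨Equiv.Perm.decomposeFin.symm (0, π), by simp⟩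
      left_inv := fun τ => by
        have h1 : (Equiv.Perm.decomposeFin τ.1).1 = 0 := by
          have h2 := Equiv.Perm.decomposeFin_symm_apply_zero
            (Equiv.Perm.decomposeFin τ.1).1 (Equiv.Perm.decomposeFin τ.1).2
          rw [Prod.mk.eta, Equiv.symm_apply_apply] at h2
          rw [← h2, τ.2]
        refine Subtype.ext ?_
        conv_rhs => rw [← Equiv.symm_apply_apply Equiv.Perm.decomposeFin τ.1]
        rw [← Prod.mk.eta (p := Equiv.Perm.decomposeFin τ.1), h1]
      right_inv := fun π => by simp }
  rw [Fintype.card_congr e, Fintype.card_perm, Fintype.card_fin]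


/-- The `ℤ`-linear map `βₙ : ℤ[Sₙ] → ℤ⟨x₁,…,xₙ⟩`, from the free `ℤ`-module with basis `Sₙ`
to the free associative ring on `x₁,…,xₙ`, defined on basis elements by
`βₙ(σ) = [x_{σ(1)},…,x_{σ(n)}]` (left-normed commutator bracket). -/
noncomputable def betaMap (n : ℕ) :
    (Equiv.Perm (Fin n) →₀ ℤ) →ₗ[ℤ] FreeAlgebra ℤ (Fin n) :=
  Finsupp.linearCombination ℤ fun σ => lieWord (List.ofFn fun i => FreeAlgebra.ι ℤ (σ i))

/-- `Sum(T) = ∑_{σ ∈ T} σ ∈ ℤ[Sₙ]` for a subset `T ⊆ Sₙ`. -/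
noncomputable def SumT {n : ℕ} (T : Set (Equiv.Perm (Fin n))) : Equiv.Perm (Fin n) →₀ ℤ :=
  ∑ᶠ σ ∈ T, Finsupp.single σ 1

/-- For `n ≥ 2`, the kernel of `βₙ` is a free abelian group of rank `(n−1)!·(n−1)`. -/
theorem ker_betaMap_free_rank (n : ℕ) (hn : 2 ≤ n) :
    Module.Free ℤ (LinearMap.ker (betaMap n)) ∧
      Module.finrank ℤ (LinearMap.ker (betaMap n)) = (n - 1).factorial * (n - 1) := by
  classical
  obtain ⟨m, rfl⟩ : ∃ m, n = m + 1 := ⟨n - 1, by omega⟩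
  set F := betaMap (m+1) with hF
  set v : {τ : Equiv.Perm (Fin (m+1)) // τ 0 = 0} → FreeAlgebra ℤ (Fin (m+1)) :=
    fun τ => lieWord (List.ofFn fun i => FreeAlgebra.ι ℤ (τ.1 i)) with hv
  have hrange : LinearMap.range F = Submodule.span ℤ (Set.range v) := by
    apply le_antisymm
    · rw [hF, betaMap, Finsupp.range_linearCombination]
      refine Submodule.span_le.2 ?_
      rintro _ ⟨σ, rfl⟩
      exact bword_mem_span σ
    · refine Submodule.span_le.2 ?_
      rintro _ ⟨τ, rfl⟩
      refine ⟨Finsupp.single τ.1 1, ?_⟩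
      rw [hF, betaMap, Finsupp.linearCombination_single, one_smul]
  have hindep : LinearIndependent ℤ v := bword_indep
  let b : Module.Basis _ ℤ (Submodule.span ℤ (Set.range v)) := Module.Basis.span hindep
  have hfreeW : Module.Free ℤ (LinearMap.range F) := by
    rw [hrange]; exact Module.Free.of_basis b
  have hfinW : Module.finrank ℤ (LinearMap.range F) = Nat.factorial m := by
    rw [hrange, Module.finrank_eq_card_basis b, card_sub]
  haveI := hfreeW
  obtain ⟨g, hg⟩ := Module.projective_lifting_property F.rangeRestrict LinearMap.id
    F.surjective_rangeRestrict
  have e := splitKer F.rangeRestrict g hg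
  rw [LinearMap.ker_rangeRestrict] at e
  have hM : Module.finrank ℤ (Equiv.Perm (Fin (m+1)) →₀ ℤ) = Nat.factorial (m+1) := by
    rw [Module.finrank_finsupp_self, Fintype.card_perm, Fintype.card_fin]
  have hsum := e.finrank_eq
  rw [Module.finrank_prod, hM, hfinW] at hsum
  refine ⟨inferInstance, ?_⟩
  have hfact : Nat.factorial (m+1) = Nat.factorial m * m + Nat.factorial m := by
    rw [Nat.factorial_succ]; ring
  have hker : Module.finrank ℤ (LinearMap.ker F) = Nat.factorial m * m := by
    omega
  simpa using hker
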